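/- Let C be an essentially small abelian category, 𝒢 a generator of C, and S a dense complete full subcategory of C containing 𝒢; let g(S) be the subgroup of K0(C) generated by {[A] : A ∈ S}. Then the relation ~ on isomorphism classes of objects of C, given by A ~ B if and only if there exist objects S_A and S_B in S with A ⊕ S_A ≅ B ⊕ S_B, is an equivalence relation whose quotient G_S is an abelian group under {A} + {B} := {A ⊕ B} with identity {0}; the map K0(C)/g(S) → G_S sending [A] + g(S) to {A} is a well-defined group isomorphism; and an object A of C belongs to S if and only if [A] ∈ g(S). -/

import Mathlib

/-!
Grothendieck groups of essentially small abelian categories.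

`K0 C` is the quotient of the free abelian group on the isomorphism classes of objects
of `C` by the subgroup generated by the Euler relations `⟨A⟩ - ⟨B⟩ + ⟨C⟩` coming from
short exact sequences `0 ⟶ A ⟶ B ⟶ C ⟶ 0`; `K0.mk C A` is the class `[A]`.
A full subcategory (identified with its set of objects) is *dense* if every object of `C`
is a direct summand of an object of the subcategory, and *complete* if whenever two of
the three objects of a short exact sequence lie in it, so does the third.
A *generator* (resp. *cogenerator*) is a full additive subcategory `𝒢` such that every
object `A` fits in a short exact sequence `0 ⟶ A' ⟶ G ⟶ A ⟶ 0`
(resp. `0 ⟶ A ⟶ G ⟶ A' ⟶ 0`) with `G ∈ 𝒢`.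
-/

open CategoryTheory CategoryTheory.Limits ZeroObject

universe w v u

namespace AbK0

variable (C : Type u) [Category.{v} C] [Abelian C]

/-- `IsSES f g` says that `0 ⟶ A ⟶ B ⟶ D ⟶ 0` given by `f : A ⟶ B` and `g : B ⟶ D`
is a short exact sequence. -/
def IsSES {A B D : C} (f : A ⟶ B) (g : B ⟶ D) : Prop :=
  ∃ w : f ≫ g = 0, (ShortComplex.mk f g w).ShortExact

/-- The isomorphism class of an object. -/
def isoCl (A : C) : Quotient (isIsomorphicSetoid C) := Quotient.mk (isIsomorphicSetoid C) A

/-- The subgroup of Euler relations coming from short exact sequences. -/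
def K0Rels : AddSubgroup (FreeAbelianGroup (Quotient (isIsomorphicSetoid C))) :=
  AddSubgroup.closure
    { x | ∃ S : ShortComplex C, S.ShortExact ∧
        x = FreeAbelianGroup.of (isoCl C S.X₁) - FreeAbelianGroup.of (isoCl C S.X₂)
          + FreeAbelianGroup.of (isoCl C S.X₃) }

/-- The Grothendieck group of the abelian category `C`. -/
def K0 : Type u := FreeAbelianGroup (Quotient (isIsomorphicSetoid C)) ⧸ K0Rels C

noncomputable instance : AddCommGroup (K0 C) :=
  QuotientAddGroup.Quotient.addCommGroup _

/-- The class `[A]` of an object `A` in the Grothendieck group. -/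
def K0.mk (A : C) : K0 C := QuotientAddGroup.mk (FreeAbelianGroup.of (isoCl C A))

/-- A full subcategory is dense if every object of `C` is a direct summand of an object
of the subcategory. -/
noncomputable def DenseSub (S : Set C) : Prop :=
  ∀ A : C, ∃ X ∈ S, ∃ A' : C, Nonempty (X ≅ A ⊞ A')

/-- A full subcategory is complete if, in any short exact sequence, whenever two of the
three objects belong to the subcategory, so does the third. -/
def CompleteSub (S : Set C) : Prop :=
  ∀ ⦃A B D : C⦄ (f : A ⟶ B) (g : B ⟶ D), IsSES C f g →
    ((A ∈ S → B ∈ S → D ∈ S) ∧ (A ∈ S → D ∈ S → B ∈ S) ∧ (B ∈ S → D ∈ S → A ∈ S))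

/-- A full additive subcategory: it contains a zero object and is closed under
binary direct sums. -/
noncomputable def AdditiveSub (G : Set C) : Prop :=
  (0 : C) ∈ G ∧ ∀ A B : C, A ∈ G → B ∈ G → (A ⊞ B) ∈ G

/-- `𝒢` is a generator of `C`: a full additive subcategory such that every object `A`
admits a short exact sequence `0 ⟶ A' ⟶ G ⟶ A ⟶ 0` with `G ∈ 𝒢`. -/
noncomputable def IsGenerator (G : Set C) : Prop :=
  AdditiveSub C G ∧
    ∀ A : C, ∃ (A' Gb : C) (f : A' ⟶ Gb) (g : Gb ⟶ A), Gb ∈ G ∧ IsSES C f g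

/-- `𝒢` is a cogenerator of `C`: a full additive subcategory such that every object `A`
admits a short exact sequence `0 ⟶ A ⟶ G ⟶ A' ⟶ 0` with `G ∈ 𝒢`. -/
noncomputable def IsCogenerator (G : Set C) : Prop :=
  AdditiveSub C G ∧
    ∀ A : C, ∃ (Gb A' : C) (f : A ⟶ Gb) (g : Gb ⟶ A'), Gb ∈ G ∧ IsSES C f g

end AbK0

open AbK0

section Helpers

variable {C : Type u} [Category.{v} C] [Abelian C]

lemma isSES_of_iso {A B : C} (e : A ≅ B) : IsSES C e.hom (0 : B ⟶ (0 : C)) := by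
  refine ⟨comp_zero, ?_⟩
  have hepi : Epi (0 : B ⟶ (0 : C)) := ⟨fun g h _ => (isZero_zero C).eq_of_src g h⟩
  refine ShortComplex.ShortExact.mk' ?_ inferInstance hepi
  rw [ShortComplex.exact_iff_epi _ rfl]
  infer_instance

lemma isSES_inl_snd (A B : C) :
    IsSES C (biprod.inl : A ⟶ A ⊞ B) (biprod.snd : A ⊞ B ⟶ B) := by
  refine ⟨biprod.inl_snd, ShortComplex.ShortExact.mk' ?_ inferInstance inferInstance⟩
  apply ShortComplex.exact_of_f_is_kernel
  exact KernelFork.IsLimit.ofι' _ _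
    (fun {W} u hu => ⟨u ≫ biprod.fst, by apply biprod.hom_ext <;> simp [hu]⟩)

lemma sesBiprodRight {A B D : C} {f : A ⟶ B} {g : B ⟶ D} (h : IsSES C f g) (E : C) :
    IsSES C (f ≫ (biprod.inl : B ⟶ B ⊞ E)) (biprod.map g (𝟙 E)) := by
  obtain ⟨w, hse⟩ := h
  haveI := hse.mono_f
  haveI := hse.epi_g
  have w' : (f ≫ (biprod.inl : B ⟶ B ⊞ E)) ≫ biprod.map g (𝟙 E) = 0 := by
    rw [Category.assoc, biprod.inl_map, ← Category.assoc, w, zero_comp]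
  have hepi : Epi (biprod.map g (𝟙 E)) := by
    refine ⟨fun {Z} u v huv => ?_⟩
    apply biprod.hom_ext'
    · have h1 : biprod.inl ≫ biprod.map g (𝟙 E) ≫ u = biprod.inl ≫ biprod.map g (𝟙 E) ≫ v := by
        rw [huv]
      rw [biprod.inl_map_assoc, biprod.inl_map_assoc] at h1
      exact (cancel_epi g).mp h1
    · have h1 : biprod.inr ≫ biprod.map g (𝟙 E) ≫ u = biprod.inr ≫ biprod.map g (𝟙 E) ≫ v := by
        rw [huv]
      simpa using h1
  haveI hmono : Mono (f ≫ (biprod.inl : B ⟶ B ⊞ E)) := mono_comp _ _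
  refine ⟨w', ShortComplex.ShortExact.mk' ?_ hmono hepi⟩
  apply ShortComplex.exact_of_f_is_kernel
  have hK := hse.exact.fIsKernel
  refine KernelFork.IsLimit.ofι' _ _ (fun {W} u hu => ?_)
  have h1 : (u ≫ biprod.fst) ≫ g = 0 := by
    have := hu =≫ biprod.fst
    simpa [biprod.map_fst] using this
  obtain ⟨l, hl⟩ := KernelFork.IsLimit.lift' hK (u ≫ biprod.fst) h1
  refine ⟨l, ?_⟩
  have h2 : u ≫ biprod.snd = 0 := by
    have := hu =≫ biprod.snd
    simpa [biprod.map_snd] using this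
  apply biprod.hom_ext
  · simpa using hl
  · simp [h2]

lemma sesBiprodLeft {A B D : C} {f : A ⟶ B} {g : B ⟶ D} (h : IsSES C f g) (E : C) :
    IsSES C (biprod.map f (𝟙 E)) ((biprod.fst : B ⊞ E ⟶ B) ≫ g) := by
  obtain ⟨w, hse⟩ := h
  haveI := hse.mono_f
  haveI := hse.epi_g
  have w' : biprod.map f (𝟙 E) ≫ (biprod.fst : B ⊞ E ⟶ B) ≫ g = 0 := by
    rw [biprod.map_fst_assoc, w, comp_zero]
  have hepi : Epi ((biprod.fst : B ⊞ E ⟶ B) ≫ g) := by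
    refine ⟨fun {Z} u v huv => ?_⟩
    have h1 := biprod.inl ≫= huv
    simp only [← Category.assoc, biprod.inl_fst] at h1
    simp only [Category.id_comp, Category.assoc] at h1
    exact (cancel_epi g).mp h1
  haveI hmono : Mono (biprod.map f (𝟙 E)) := by
    refine ⟨fun {Z} u v huv => ?_⟩
    apply biprod.hom_ext
    · have h1 := huv =≫ biprod.fst
      simp only [Category.assoc, biprod.map_fst] at h1
      simp only [← Category.assoc] at h1
      exact (cancel_mono f).mp h1
    · have h1 := huv =≫ biprod.snd
      simpa [biprod.map_snd] using h1
  refine ⟨w', ShortComplex.ShortExact.mk' ?_ hmono hepi⟩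
  apply ShortComplex.exact_of_f_is_kernel
  have hK := hse.exact.fIsKernel
  refine KernelFork.IsLimit.ofι' _ _ (fun {W} u hu => ?_)
  have h1 : (u ≫ biprod.fst) ≫ g = 0 := by
    rw [Category.assoc]; exact hu
  obtain ⟨l, hl⟩ := KernelFork.IsLimit.lift' hK (u ≫ biprod.fst) h1
  refine ⟨biprod.lift l (u ≫ biprod.snd), ?_⟩
  apply biprod.hom_ext
  · simpa [biprod.map_fst] using hl
  · simp [biprod.map_snd]

/-- `(X ⊞ Y) ⊞ Z ≅ (X ⊞ Z) ⊞ Y`. -/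
noncomputable def permB (X Y Z : C) : (X ⊞ Y) ⊞ Z ≅ (X ⊞ Z) ⊞ Y :=
  biprod.associator X Y Z ≪≫ biprod.mapIso (Iso.refl X) (biprod.braiding Y Z) ≪≫
    (biprod.associator X Z Y).symm

/-- `X ⊞ (W ⊞ Z) ≅ Z ⊞ (W ⊞ X)`. -/
noncomputable def rotB (X W Z : C) : X ⊞ (W ⊞ Z) ≅ Z ⊞ (W ⊞ X) :=
  biprod.braiding X (W ⊞ Z) ≪≫ biprod.mapIso (biprod.braiding W Z) (Iso.refl X) ≪≫
    biprod.associator Z W X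

end Helpers


/-- For a generator `𝒢` and a dense complete full subcategory `S ⊇ 𝒢` of an abelian
category: the relation `A ~ B ↔ ∃ S_A, S_B ∈ S, A ⊕ S_A ≅ B ⊕ S_B` is an equivalence
relation whose quotient `G_S` is an abelian group with `{A} + {B} = {A ⊕ B}` and
identity `{0}`; the map `K₀(C)/g(S) → G_S`, `[A] + g(S) ↦ {A}`, is a well-defined group
isomorphism; and `A ∈ S ↔ [A] ∈ g(S)`. -/
theorem quotient_K0_iso_GS_abelian
    (C : Type u) [Category.{v} C] [Abelian C] [EssentiallySmall.{w} C]
    (G : Set C) (hG : IsGenerator C G)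
    (S : Set C) (hdense : DenseSub C S) (hcomplete : CompleteSub C S) (hGS : G ⊆ S)
    (r : C → C → Prop)
    (hr : ∀ A B : C, r A B ↔ ∃ SA ∈ S, ∃ SB ∈ S, Nonempty ((A ⊞ SA) ≅ B ⊞ SB)) :
    Equivalence r ∧
    (∃ inst : AddCommGroup (Quot r), letI := inst;
      ((∀ A B : C, Quot.mk r A + Quot.mk r B = Quot.mk r (A ⊞ B)) ∧
       ((0 : Quot r) = Quot.mk r (0 : C)) ∧
       ∃ φ : (K0 C ⧸ AddSubgroup.closure (K0.mk C '' S)) ≃+ Quot r,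
         ∀ A : C, φ (QuotientAddGroup.mk (K0.mk C A)) = Quot.mk r A)) ∧
    (∀ A : C, A ∈ S ↔ K0.mk C A ∈ AddSubgroup.closure (K0.mk C '' S)) := by
  classical
  -- basic membership facts about `S`
  have hS0 : (0 : C) ∈ S := hGS hG.1.1
  have memIso : ∀ {A B : C}, (A ≅ B) → A ∈ S → B ∈ S := fun {A B} e hA =>
    (hcomplete e.hom (0 : B ⟶ (0 : C)) (isSES_of_iso e)).2.1 hA hS0
  have memBiprod : ∀ {A B : C}, A ∈ S → B ∈ S → (A ⊞ B) ∈ S := fun {A B} hA hB =>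
    (hcomplete _ _ (isSES_inl_snd A B)).2.1 hA hB
  -- `r` is invariant under isomorphism and an equivalence relation
  have rIso : ∀ {A B : C}, (A ≅ B) → r A B := fun {A B} e =>
    (hr A B).mpr ⟨0, hS0, 0, hS0, ⟨biprod.mapIso e (Iso.refl 0)⟩⟩
  have hrefl : ∀ A : C, r A A := fun A => rIso (Iso.refl A)
  have hsymm : ∀ {A B : C}, r A B → r B A := by
    intro A B h
    obtain ⟨SA, hSA, SB, hSB, ⟨e⟩⟩ := (hr A B).mp h
    exact (hr B A).mpr ⟨SB, hSB, SA, hSA, ⟨e.symm⟩⟩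
  have htrans : ∀ {A B D : C}, r A B → r B D → r A D := by
    intro A B D h1 h2
    obtain ⟨SA, hSA, SB, hSB, ⟨e1⟩⟩ := (hr A B).mp h1
    obtain ⟨TB, hTB, TD, hTD, ⟨e2⟩⟩ := (hr B D).mp h2
    refine (hr A D).mpr ⟨SA ⊞ TB, memBiprod hSA hTB, TD ⊞ SB, memBiprod hTD hSB, ⟨?_⟩⟩
    calc A ⊞ (SA ⊞ TB) ≅ (A ⊞ SA) ⊞ TB := (biprod.associator A SA TB).symm
      _ ≅ (B ⊞ SB) ⊞ TB := biprod.mapIso e1 (Iso.refl TB)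
      _ ≅ (B ⊞ TB) ⊞ SB := permB B SB TB
      _ ≅ (D ⊞ TD) ⊞ SB := biprod.mapIso e2 (Iso.refl SB)
      _ ≅ D ⊞ (TD ⊞ SB) := biprod.associator D TD SB
  have hequiv : Equivalence r := ⟨hrefl, fun h => hsymm h, fun h1 h2 => htrans h1 h2⟩
  -- the key lemma: for a short exact sequence with middle term in `S`,
  -- the ends sum to the middle up to `r`
  have hheller : ∀ {A T D : C} (f : A ⟶ T) (g : T ⟶ D), IsSES C f g → T ∈ S →
      r (A ⊞ D) T := by
    intro A T D f g hses hT
    obtain ⟨X, hX, A', ⟨eX⟩⟩ := hdense A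
    obtain ⟨Y, hY, D', ⟨eY⟩⟩ := hdense D
    have h2 := sesBiprodLeft (sesBiprodRight hses D') A'
    have hAA' : (A ⊞ A') ∈ S := memIso eX hX
    have hDD' : (D ⊞ D') ∈ S := memIso eY hY
    have hZ : ((T ⊞ D') ⊞ A') ∈ S := (hcomplete _ _ h2).2.1 hAA' hDD'
    refine (hr _ _).mpr ⟨(T ⊞ D') ⊞ A', hZ, (A ⊞ A') ⊞ (D ⊞ D'), memBiprod hAA' hDD', ⟨?_⟩⟩
    calc (A ⊞ D) ⊞ ((T ⊞ D') ⊞ A')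
        ≅ ((T ⊞ D') ⊞ A') ⊞ (A ⊞ D) := biprod.braiding _ _
      _ ≅ (T ⊞ D') ⊞ (A' ⊞ (A ⊞ D)) := biprod.associator _ _ _
      _ ≅ T ⊞ (D' ⊞ (A' ⊞ (A ⊞ D))) := biprod.associator _ _ _
      _ ≅ T ⊞ (D' ⊞ ((A' ⊞ A) ⊞ D)) :=
          biprod.mapIso (Iso.refl T) (biprod.mapIso (Iso.refl D')
            (biprod.associator A' A D).symm)
      _ ≅ T ⊞ (D' ⊞ ((A ⊞ A') ⊞ D)) :=
          biprod.mapIso (Iso.refl T) (biprod.mapIso (Iso.refl D')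
            (biprod.mapIso (biprod.braiding A' A) (Iso.refl D)))
      _ ≅ T ⊞ (((A ⊞ A') ⊞ D) ⊞ D') :=
          biprod.mapIso (Iso.refl T) (biprod.braiding _ _)
      _ ≅ T ⊞ ((A ⊞ A') ⊞ (D ⊞ D')) :=
          biprod.mapIso (Iso.refl T) (biprod.associator _ _ _)
  -- the group structure on `Quot r`
  have radd_right : ∀ (A : C) {B B' : C}, r B B' → r (A ⊞ B) (A ⊞ B') := by
    intro A B B' h
    obtain ⟨SB, hSB, SB', hSB', ⟨e⟩⟩ := (hr B B').mp h
    refine (hr _ _).mpr ⟨SB, hSB, SB', hSB', ⟨?_⟩⟩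
    calc (A ⊞ B) ⊞ SB ≅ A ⊞ (B ⊞ SB) := biprod.associator _ _ _
      _ ≅ A ⊞ (B' ⊞ SB') := biprod.mapIso (Iso.refl A) e
      _ ≅ (A ⊞ B') ⊞ SB' := (biprod.associator _ _ _).symm
  have radd_left : ∀ (B : C) {A A' : C}, r A A' → r (A ⊞ B) (A' ⊞ B) := by
    intro B A A' h
    obtain ⟨SA, hSA, SA', hSA', ⟨e⟩⟩ := (hr A A').mp h
    refine (hr _ _).mpr ⟨SA, hSA, SA', hSA', ⟨?_⟩⟩
    calc (A ⊞ B) ⊞ SA ≅ (A ⊞ SA) ⊞ B := permB A B SA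
      _ ≅ (A' ⊞ SA') ⊞ B := biprod.mapIso e (Iso.refl B)
      _ ≅ (A' ⊞ B) ⊞ SA' := permB A' SA' B
  -- negation via density
  let nX : C → C := fun A => (hdense A).choose
  let nf : C → C := fun A => (hdense A).choose_spec.2.choose
  have hnX : ∀ A : C, nX A ∈ S := fun A => (hdense A).choose_spec.1
  have hne : ∀ A : C, Nonempty (nX A ≅ A ⊞ nf A) := fun A =>
    (hdense A).choose_spec.2.choose_spec
  have negwd : ∀ (a b : C), r a b → r (nf a) (nf b) := by
    intro a b h
    obtain ⟨SA, hSA, SB, hSB, ⟨e⟩⟩ := (hr a b).mp h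
    obtain ⟨eX⟩ := hne a
    obtain ⟨eY⟩ := hne b
    refine (hr _ _).mpr ⟨nX b ⊞ SB, memBiprod (hnX b) hSB,
      nX a ⊞ SA, memBiprod (hnX a) hSA, ⟨?_⟩⟩
    calc nf a ⊞ (nX b ⊞ SB)
        ≅ nf a ⊞ ((b ⊞ nf b) ⊞ SB) :=
          biprod.mapIso (Iso.refl _) (biprod.mapIso eY (Iso.refl _))
      _ ≅ nf a ⊞ ((b ⊞ SB) ⊞ nf b) := biprod.mapIso (Iso.refl _) (permB b (nf b) SB)
      _ ≅ nf a ⊞ ((a ⊞ SA) ⊞ nf b) :=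
          biprod.mapIso (Iso.refl _) (biprod.mapIso e.symm (Iso.refl _))
      _ ≅ nf b ⊞ ((a ⊞ SA) ⊞ nf a) := rotB (nf a) (a ⊞ SA) (nf b)
      _ ≅ nf b ⊞ ((a ⊞ nf a) ⊞ SA) := biprod.mapIso (Iso.refl _) (permB a SA (nf a))
      _ ≅ nf b ⊞ (nX a ⊞ SA) :=
          biprod.mapIso (Iso.refl _) (biprod.mapIso eX.symm (Iso.refl _))
  letI instAdd : Add (Quot r) :=
    ⟨Quot.map₂ (fun A B => A ⊞ B) (fun a _ _ h => radd_right a h)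
      (fun _ _ b h => radd_left b h)⟩
  letI instZero : Zero (Quot r) := ⟨Quot.mk r 0⟩
  letI instNeg : Neg (Quot r) :=
    ⟨Quot.lift (fun A => Quot.mk r (nf A)) (fun a b h => Quot.sound (negwd a b h))⟩
  have hassoc : ∀ x y z : Quot r, x + y + z = x + (y + z) := by
    intro x y z
    induction x using Quot.ind with | _ a => ?_
    induction y using Quot.ind with | _ b => ?_
    induction z using Quot.ind with | _ c => ?_
    exact Quot.sound (rIso (biprod.associator a b c))
  have hzadd : ∀ x : Quot r, 0 + x = x := by
    intro x
    induction x using Quot.ind with | _ a => ?_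
    exact Quot.sound (rIso (isoZeroBiprod (isZero_zero C)).symm)
  have haddz : ∀ x : Quot r, x + 0 = x := by
    intro x
    induction x using Quot.ind with | _ a => ?_
    exact Quot.sound (rIso (biprod.braiding a 0 ≪≫ (isoZeroBiprod (isZero_zero C)).symm))
  have hadd0 : ∀ A B : C, Quot.mk r A + Quot.mk r B = Quot.mk r (A ⊞ B) := fun A B => rfl
  have hneg0 : ∀ A : C, -Quot.mk r A = Quot.mk r (nf A) := fun A => rfl
  have hnegadd : ∀ x : Quot r, -x + x = 0 := by
    intro x
    induction x using Quot.ind with | _ a => ?_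
    rw [hneg0 a, hadd0 (nf a) a]
    refine Quot.sound ((hr _ _).mpr ⟨0, hS0, nf a ⊞ a, ?_, ⟨biprod.braiding _ _⟩⟩)
    exact memIso (biprod.braiding a (nf a)) (memIso (hne a).some (hnX a))
  have hcomm : ∀ x y : Quot r, x + y = y + x := by
    intro x y
    induction x using Quot.ind with | _ a => ?_
    induction y using Quot.ind with | _ b => ?_
    exact Quot.sound (rIso (biprod.braiding a b))
  letI instGroup : AddCommGroup (Quot r) :=
    { add := (· + ·)
      zero := (0 : Quot r)
      neg := Neg.neg
      nsmul := nsmulRec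
      zsmul := zsmulRec
      add_assoc := hassoc
      zero_add := hzadd
      add_zero := haddz
      neg_add_cancel := hnegadd
      add_comm := hcomm }
  have hadd : ∀ A B : C, Quot.mk r A + Quot.mk r B = Quot.mk r (A ⊞ B) := fun A B => rfl
  have hzero : (0 : Quot r) = Quot.mk r (0 : C) := rfl
  -- Euler relations hold in `Quot r`
  have euler : ∀ {A B D : C} (f : A ⟶ B) (g : B ⟶ D), IsSES C f g →
      Quot.mk r A + Quot.mk r D = Quot.mk r B := by
    intro A B D f g hses
    obtain ⟨X, hX, B', ⟨eX⟩⟩ := hdense B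
    have h1 := sesBiprodRight hses B'
    have h2 : r (A ⊞ (D ⊞ B')) (B ⊞ B') := hheller _ _ h1 (memIso eX hX)
    have h3 : Quot.mk r A + (Quot.mk r D + Quot.mk r B') = Quot.mk r B + Quot.mk r B' := by
      rw [hadd, hadd, hadd]
      exact Quot.sound h2
    rw [← add_assoc] at h3
    exact add_right_cancel h3
  -- the homomorphism from the free abelian group
  let F : Quotient (isIsomorphicSetoid C) → Quot r :=
    Quotient.lift (fun A => Quot.mk r A)
      (fun a b h => Quot.sound (rIso (Classical.choice h)))
  let χ : FreeAbelianGroup (Quotient (isIsomorphicSetoid C)) →+ Quot r :=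
    FreeAbelianGroup.lift F
  have hχof : ∀ A : C, χ (FreeAbelianGroup.of (isoCl C A)) = Quot.mk r A := fun A =>
    FreeAbelianGroup.lift_apply_of F _
  have hker : ∀ x ∈ K0Rels C, χ x = 0 := by
    have : K0Rels C ≤ χ.ker := by
      refine (AddSubgroup.closure_le _).mpr ?_
      rintro y ⟨Sc, hSc, rfl⟩
      have hE : Quot.mk r Sc.X₁ + Quot.mk r Sc.X₃ = Quot.mk r Sc.X₂ :=
        euler Sc.f Sc.g ⟨Sc.zero, hSc⟩
      have : χ (FreeAbelianGroup.of (isoCl C Sc.X₁) - FreeAbelianGroup.of (isoCl C Sc.X₂)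
          + FreeAbelianGroup.of (isoCl C Sc.X₃)) = 0 := by
        rw [map_add, map_sub, hχof, hχof, hχof, sub_add_eq_add_sub, sub_eq_zero]
        exact hE
      exact this
    exact fun x hx => this hx
  let χ' : K0 C →+ Quot r := QuotientAddGroup.lift (K0Rels C) χ hker
  have hχ'mk : ∀ A : C, χ' (K0.mk C A) = Quot.mk r A := fun A => hχof A
  have rzero : ∀ {A : C}, A ∈ S → Quot.mk r A = (0 : Quot r) := by
    intro A hA
    exact Quot.sound ((hr A 0).mpr ⟨0, hS0, A, hA, ⟨biprod.braiding A 0⟩⟩)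
  have hker2 : ∀ x ∈ AddSubgroup.closure (K0.mk C '' S), χ' x = 0 := by
    have : AddSubgroup.closure (K0.mk C '' S) ≤ χ'.ker := by
      refine (AddSubgroup.closure_le _).mpr ?_
      rintro y ⟨A, hA, rfl⟩
      have : χ' (K0.mk C A) = 0 := by rw [hχ'mk]; exact rzero hA
      exact this
    exact fun x hx => this hx
  let φhat : (K0 C ⧸ AddSubgroup.closure (K0.mk C '' S)) →+ Quot r :=
    QuotientAddGroup.lift _ χ' hker2
  have hφmk : ∀ A : C, φhat (QuotientAddGroup.mk (K0.mk C A)) = Quot.mk r A :=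
    fun A => hχ'mk A
  -- basic facts about `K0.mk`
  have hmkiso : ∀ {A B : C}, (A ≅ B) → K0.mk C A = K0.mk C B := by
    intro A B e
    have : isoCl C A = isoCl C B := Quotient.sound ⟨e⟩
    unfold K0.mk
    rw [this]
  have hmkbiprod : ∀ A B : C, K0.mk C (A ⊞ B) = K0.mk C A + K0.mk C B := by
    intro A B
    obtain ⟨w, hw⟩ := isSES_inl_snd A B
    have hrel : FreeAbelianGroup.of (isoCl C A) - FreeAbelianGroup.of (isoCl C (A ⊞ B))
        + FreeAbelianGroup.of (isoCl C B) ∈ K0Rels C :=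
      AddSubgroup.subset_closure ⟨ShortComplex.mk _ _ w, hw, rfl⟩
    have h0 : K0.mk C A - K0.mk C (A ⊞ B) + K0.mk C B = 0 := by
      have := (QuotientAddGroup.eq_zero_iff _).mpr hrel
      rw [QuotientAddGroup.mk_add, QuotientAddGroup.mk_sub] at this
      exact this
    rw [sub_add_eq_add_sub, sub_eq_zero] at h0
    exact h0.symm
  -- the inverse map
  have ψwd : ∀ (a b : C), r a b →
      (QuotientAddGroup.mk (K0.mk C a) : K0 C ⧸ AddSubgroup.closure (K0.mk C '' S)) =
        QuotientAddGroup.mk (K0.mk C b) := by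
    intro a b h
    obtain ⟨SA, hSA, SB, hSB, ⟨e⟩⟩ := (hr a b).mp h
    have h1 : (QuotientAddGroup.mk (K0.mk C SA) :
        K0 C ⧸ AddSubgroup.closure (K0.mk C '' S)) = 0 :=
      (QuotientAddGroup.eq_zero_iff _).mpr (AddSubgroup.subset_closure ⟨SA, hSA, rfl⟩)
    have h2 : (QuotientAddGroup.mk (K0.mk C SB) :
        K0 C ⧸ AddSubgroup.closure (K0.mk C '' S)) = 0 :=
      (QuotientAddGroup.eq_zero_iff _).mpr (AddSubgroup.subset_closure ⟨SB, hSB, rfl⟩)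
    have h3 : (QuotientAddGroup.mk (K0.mk C (a ⊞ SA)) :
        K0 C ⧸ AddSubgroup.closure (K0.mk C '' S)) = QuotientAddGroup.mk (K0.mk C (b ⊞ SB)) := by
      rw [hmkiso e]
    rw [hmkbiprod, hmkbiprod, QuotientAddGroup.mk_add, QuotientAddGroup.mk_add,
      h1, h2, add_zero, add_zero] at h3
    exact h3
  let ψ0 : Quot r → (K0 C ⧸ AddSubgroup.closure (K0.mk C '' S)) :=
    Quot.lift (fun A => QuotientAddGroup.mk (K0.mk C A)) ψwd
  have right : ∀ y : Quot r, φhat (ψ0 y) = y := by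
    intro y
    induction y using Quot.ind with | _ a => ?_
    exact hφmk a
  have left : ∀ x : K0 C ⧸ AddSubgroup.closure (K0.mk C '' S), ψ0 (φhat x) = x := by
    have key : ∀ a : FreeAbelianGroup (Quotient (isIsomorphicSetoid C)),
        ψ0 (φhat (QuotientAddGroup.mk (QuotientAddGroup.mk a : K0 C))) =
          QuotientAddGroup.mk (QuotientAddGroup.mk a : K0 C) := by
      have hof : ∀ q : Quotient (isIsomorphicSetoid C),
          ψ0 (φhat (QuotientAddGroup.mk
            (QuotientAddGroup.mk (FreeAbelianGroup.of q) : K0 C))) =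
          QuotientAddGroup.mk (QuotientAddGroup.mk (FreeAbelianGroup.of q) : K0 C) := by
        intro q
        induction q using Quotient.ind with | _ A => ?_
        have : QuotientAddGroup.mk (FreeAbelianGroup.of (Quotient.mk
            (isIsomorphicSetoid C) A)) = K0.mk C A := rfl
        rw [this, hφmk]
        rfl
      -- package the two maps as homomorphisms to use additivity
      let Θ1 : FreeAbelianGroup (Quotient (isIsomorphicSetoid C)) →+
          (K0 C ⧸ AddSubgroup.closure (K0.mk C '' S)) :=
        (QuotientAddGroup.mk' _).comp
          ((QuotientAddGroup.mk' (K0Rels C) :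
            FreeAbelianGroup (Quotient (isIsomorphicSetoid C)) →+ K0 C))
      let ψh : Quot r →+ (K0 C ⧸ AddSubgroup.closure (K0.mk C '' S)) :=
        AddMonoidHom.mk' ψ0 (by
          intro x y
          induction x using Quot.ind with | _ a => ?_
          induction y using Quot.ind with | _ b => ?_
          show QuotientAddGroup.mk (K0.mk C (a ⊞ b)) = _
          rw [hmkbiprod, QuotientAddGroup.mk_add])
      let Θ2 : FreeAbelianGroup (Quotient (isIsomorphicSetoid C)) →+
          (K0 C ⧸ AddSubgroup.closure (K0.mk C '' S)) :=
        ψh.comp (φhat.comp Θ1)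
      have claim : ∀ a, Θ2 a = Θ1 a := by
        intro a
        refine FreeAbelianGroup.induction_on a ?_ ?_ ?_ ?_
        · rw [map_zero, map_zero]
        · intro x
          exact hof x
        · intro x hx
          rw [map_neg, map_neg, hx]
        · intro x y hx hy
          rw [map_add, map_add, hx, hy]
      exact fun a => claim a
    intro x
    induction x using QuotientAddGroup.induction_on with | _ k => ?_
    induction k using QuotientAddGroup.induction_on with | _ a => ?_
    exact key a
  let φeq : (K0 C ⧸ AddSubgroup.closure (K0.mk C '' S)) ≃+ Quot r :=
    AddEquiv.mk' ⟨φhat, ψ0, left, right⟩ (fun x y => φhat.map_add x y)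
  refine ⟨hequiv, ⟨instGroup, hadd, hzero, ⟨φeq, fun A => hφmk A⟩⟩, ?_⟩
  -- membership criterion
  intro A
  constructor
  · intro hA
    exact AddSubgroup.subset_closure ⟨A, hA, rfl⟩
  · intro hA
    have h0 : (QuotientAddGroup.mk (K0.mk C A) :
        K0 C ⧸ AddSubgroup.closure (K0.mk C '' S)) = 0 :=
      (QuotientAddGroup.eq_zero_iff _).mpr hA
    have h1 : Quot.mk r A = Quot.mk r (0 : C) := by
      have := congrArg φhat h0
      rw [hφmk, map_zero] at this
      exact this
    have h2 : r A 0 := hequiv.eqvGen_iff.mp (Quot.eq.mp h1)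
    obtain ⟨SA, hSA, SB, hSB, ⟨e⟩⟩ := (hr A 0).mp h2
    have hASA : (A ⊞ SA) ∈ S :=
      memIso (isoZeroBiprod (isZero_zero C) ≪≫ e.symm) hSB
    exact (hcomplete _ _ (isSES_inl_snd A SA)).2.2 hASA hSA
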